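/- For all complex n×n matrices A, M and all real t, s ≥ 0, the pairs p_t(A, M) = (e^{tA}, ∫₀^t e^{sA} M e^{sA†} ds) satisfy the semigroup property p_t(A, M) ∘ p_s(A, M) = p_{t+s}(A, M) with respect to the composition law (U, M) ∘ (V, N) = (UV, UNU† + M); moreover p_0(A, M) = (I, O). -/

import Mathlib

open scoped Matrix

attribute [local instance] Matrix.linftyOpNormedAddCommGroup Matrix.linftyOpNormedSpace
  Matrix.linftyOpNormedRing Matrix.linftyOpNormedAlgebra

/-- The composition law `(U, M) ∘ (V, N) = (UV, UNU† + M)` of the semidirect product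
`GL(n;ℂ) ⋉ M(n;ℂ)` acting on `M(n;ℂ)` by affine transformations `X ↦ UXU† + M`. -/
noncomputable def affComp {n : ℕ}
    (p q : Matrix (Fin n) (Fin n) ℂ × Matrix (Fin n) (Fin n) ℂ) :
    Matrix (Fin n) (Fin n) ℂ × Matrix (Fin n) (Fin n) ℂ :=
  (p.1 * q.1, p.1 * q.2 * p.1ᴴ + p.2)

/-- `p_t(A, M) = (e^{tA}, ∫₀^t e^{sA} M e^{sA†} ds)`. -/
noncomputable def pAff {n : ℕ} (A M : Matrix (Fin n) (Fin n) ℂ) (t : ℝ) :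
    Matrix (Fin n) (Fin n) ℂ × Matrix (Fin n) (Fin n) ℂ :=
  (NormedSpace.exp ((t : ℂ) • A),
    ∫ s in (0 : ℝ)..t,
      NormedSpace.exp ((s : ℂ) • A) * M * NormedSpace.exp ((s : ℂ) • Aᴴ))

noncomputable instance matENormedAddMonoid {n : ℕ} : ENormedAddMonoid (Matrix (Fin n) (Fin n) ℂ) :=
  @NormedAddCommGroup.toENormedAddCommMonoid.toENormedAddMonoid _ _

section aux

variable {n : ℕ} (A M : Matrix (Fin n) (Fin n) ℂ)

private lemma exp_cont : Continuous fun u : ℝ =>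
    NormedSpace.exp ((u : ℂ) • A) :=
  NormedSpace.exp_continuous.comp
    ((Complex.continuous_ofReal.smul continuous_const : Continuous fun u : ℝ => (u : ℂ) • A))

private lemma integrand_cont : Continuous fun u : ℝ =>
    NormedSpace.exp ((u : ℂ) • A) * M * NormedSpace.exp ((u : ℂ) • Aᴴ) :=
  ((exp_cont A).mul continuous_const).mul (exp_cont Aᴴ)

private lemma exp_add (t u : ℝ) :
    NormedSpace.exp (((t + u : ℝ) : ℂ) • A) =
      NormedSpace.exp ((t : ℂ) • A) * NormedSpace.exp ((u : ℂ) • A) := by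
  rw [Complex.ofReal_add, add_smul]
  exact Matrix.exp_add_of_commute _ _
    (((Commute.refl A).smul_left _).smul_right _)

private lemma exp_conj (t : ℝ) :
    (NormedSpace.exp ((t : ℂ) • A))ᴴ = NormedSpace.exp ((t : ℂ) • Aᴴ) := by
  rw [← Matrix.exp_conjTranspose, Matrix.conjTranspose_smul]
  norm_num

private lemma hf_aux (t u : ℝ) :
    NormedSpace.exp (((t + u : ℝ) : ℂ) • A) * M *
      NormedSpace.exp (((t + u : ℝ) : ℂ) • Aᴴ) =
      NormedSpace.exp ((t : ℂ) • A) *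
        (NormedSpace.exp ((u : ℂ) • A) * M * NormedSpace.exp ((u : ℂ) • Aᴴ)) *
        (NormedSpace.exp ((t : ℂ) • A))ᴴ := by
  rw [exp_add A t u, add_comm t u, exp_add Aᴴ u t, exp_conj]
  simp only [mul_assoc]

end aux

/-- the pairs `p_t(A, M)` form a one-parameter semigroup for the
affine composition law, and `p_0(A, M) = (I, O)`. -/
theorem stmt5 {n : ℕ} (hn : 0 < n) (A M : Matrix (Fin n) (Fin n) ℂ)
    (t s : ℝ) (ht : 0 ≤ t) (hs : 0 ≤ s) :
    affComp (pAff A M t) (pAff A M s) = pAff A M (t + s) ∧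
    pAff A M 0 = (1, 0) := by
  constructor
  · refine Prod.ext ?_ ?_
    · simp only [affComp, pAff]
      exact (exp_add A t s).symm
    · simp only [affComp, pAff]
      have hInt : ∀ a b : ℝ, IntervalIntegrable
          (fun u : ℝ => NormedSpace.exp ((u : ℂ) • A) * M *
            NormedSpace.exp ((u : ℂ) • Aᴴ)) MeasureTheory.volume a b :=
        fun a b => (integrand_cont A M).intervalIntegrable a b
      have key : NormedSpace.exp ((t : ℂ) • A) *
          (∫ u in (0 : ℝ)..s, NormedSpace.exp ((u : ℂ) • A) * M *
            NormedSpace.exp ((u : ℂ) • Aᴴ)) * (NormedSpace.exp ((t : ℂ) • A))ᴴ =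
          ∫ u in t..(t + s), NormedSpace.exp ((u : ℂ) • A) * M *
            NormedSpace.exp ((u : ℂ) • Aᴴ) := by
        have h1 := ContinuousLinearMap.intervalIntegral_comp_comm
          (ContinuousLinearMap.mulLeftRight ℂ (Matrix (Fin n) (Fin n) ℂ)
            (NormedSpace.exp ((t : ℂ) • A)) (NormedSpace.exp ((t : ℂ) • A))ᴴ)
          (hInt 0 s)
        simp only [ContinuousLinearMap.mulLeftRight_apply] at h1
        calc NormedSpace.exp ((t : ℂ) • A) *
            (∫ u in (0 : ℝ)..s, NormedSpace.exp ((u : ℂ) • A) * M *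
              NormedSpace.exp ((u : ℂ) • Aᴴ)) * (NormedSpace.exp ((t : ℂ) • A))ᴴ
            = ∫ u in (0 : ℝ)..s, NormedSpace.exp ((t : ℂ) • A) *
                (NormedSpace.exp ((u : ℂ) • A) * M * NormedSpace.exp ((u : ℂ) • Aᴴ)) *
                (NormedSpace.exp ((t : ℂ) • A))ᴴ := h1.symm
          _ = ∫ u in (0 : ℝ)..s, NormedSpace.exp (((t + u : ℝ) : ℂ) • A) * M *
                NormedSpace.exp (((t + u : ℝ) : ℂ) • Aᴴ) := by
              refine intervalIntegral.integral_congr fun u _ => ?_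
              exact (hf_aux A M t u).symm
          _ = ∫ u in t..(t + s), NormedSpace.exp ((u : ℂ) • A) * M *
                NormedSpace.exp ((u : ℂ) • Aᴴ) := by
              simpa only [add_zero] using intervalIntegral.integral_comp_add_left
                (a := (0 : ℝ)) (b := s)
                (fun u : ℝ => NormedSpace.exp ((u : ℂ) • A) * M *
                  NormedSpace.exp ((u : ℂ) • Aᴴ)) t
      rw [key, add_comm]
      exact intervalIntegral.integral_add_adjacent_intervals (hInt 0 t) (hInt t (t + s))
  · simp [pAff, NormedSpace.exp_zero]
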